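/- Let $\xi \in \mathbb{R}^d$ have mutually independent, mean-zero coordinates with $\mathbb{E}[|\xi_i|^{\mathfrak{p}}] = \sigma_i^{\mathfrak{p}}$ for $\mathfrak{p} \in (1,2)$. Then for every unit vector $e = \sum_i \lambda_i e_i$ with $\sum_i \lambda_i^2 = 1$, $\mathbb{E}[|\langle e, \xi \rangle|^{\mathfrak{p}}] \le 2^{2-\mathfrak{p}} \left( \sum_{i=1}^d \sigma_i^{\frac{2\mathfrak{p}}{2-\mathfrak{p}}} \right)^{1 - \frac{\mathfrak{p}}{2}}$. -/

import Mathlib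

open MeasureTheory ProbabilityTheory Real
open scoped NNReal

noncomputable def phiF (p x : ℝ) : ℝ := x * |x| ^ (p - 2)

lemma phiF_of_nonneg {p x : ℝ} (hp : p ≠ 1) (hx : 0 ≤ x) : phiF p x = x ^ (p - 1) := by
  rcases eq_or_lt_of_le hx with h | h
  · rw [← h, Real.zero_rpow (sub_ne_zero.2 hp)]; simp [phiF]
  · rw [phiF, abs_of_pos h, show p - 1 = 1 + (p - 2) by ring, Real.rpow_add h, Real.rpow_one]

lemma phiF_neg (p x : ℝ) : phiF p (-x) = - phiF p x := by
  simp [phiF, abs_neg, neg_mul]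

lemma phiF_of_nonpos {p x : ℝ} (hp : p ≠ 1) (hx : x ≤ 0) : phiF p x = -((-x) ^ (p - 1)) := by
  have h := phiF_neg p (-x)
  rw [neg_neg] at h
  rw [h, phiF_of_nonneg hp (by linarith)]

lemma abs_phiF {p : ℝ} (hp : p ≠ 1) (x : ℝ) : |phiF p x| = |x| ^ (p - 1) := by
  rcases le_total 0 x with hx | hx
  · rw [phiF_of_nonneg hp hx, abs_of_nonneg (Real.rpow_nonneg hx _), abs_of_nonneg hx]
  · rw [phiF_of_nonpos hp hx, abs_neg, abs_of_nonneg (Real.rpow_nonneg (by linarith) _),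
      abs_of_nonpos hx]

lemma two_rpow_bound {s : ℝ} (hs0 : 0 < s) (hs1 : s ≤ 1) {u v : ℝ} (hu : 0 ≤ u) (hv : 0 ≤ v) :
    u ^ s + v ^ s ≤ 2 ^ (1 - s) * (u + v) ^ s := by
  have hq : (1:ℝ) ≤ 1 / s := (le_div_iff₀ hs0).2 (by linarith)
  have h := Real.rpow_arith_mean_le_arith_mean_rpow Finset.univ ![1/2, 1/2] ![u ^ s, v ^ s]
      (by intro i _; fin_cases i <;> norm_num)
      (by simp [Fin.sum_univ_two]; norm_num)
      (by intro i _; fin_cases i <;> simp [Real.rpow_nonneg hu, Real.rpow_nonneg hv])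
      hq
  simp only [Fin.sum_univ_two, Matrix.cons_val_zero, Matrix.cons_val_one, Matrix.head_cons] at h
  have hus : (u ^ s) ^ (1/s) = u := by
    rw [← Real.rpow_mul hu, mul_one_div, div_self hs0.ne', Real.rpow_one]
  have hvs : (v ^ s) ^ (1/s) = v := by
    rw [← Real.rpow_mul hv, mul_one_div, div_self hs0.ne', Real.rpow_one]
  rw [hus, hvs] at h
  have h2 : 1/2 * u ^ s + 1/2 * v ^ s ≤ ((u+v)/2) ^ s := by
    have := Real.rpow_le_rpow (Real.rpow_nonneg (by positivity) (1/s)) h hs0.le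
    rwa [← Real.rpow_mul (by positivity), one_div_mul_cancel hs0.ne', Real.rpow_one,
      show 1/2 * u + 1/2 * v = (u+v)/2 by ring] at this
  have h3 : ((u+v)/2 : ℝ) ^ s = (u+v) ^ s / 2 ^ s :=
    Real.div_rpow (by positivity) (by norm_num : (0:ℝ) ≤ 2) s
  have h4 : (2:ℝ) ^ (1-s) = 2 / 2 ^ s := by
    rw [Real.rpow_sub (by norm_num), Real.rpow_one]
  rw [h4]
  have h5 : (0:ℝ) < 2 ^ s := Real.rpow_pos_of_pos (by norm_num) s
  calc u ^ s + v ^ s = 2 * (1/2 * u ^ s + 1/2 * v ^ s) := by ring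
    _ ≤ 2 * ((u+v)/2) ^ s := by linarith
    _ = 2 / 2 ^ s * (u+v) ^ s := by rw [h3]; ring

lemma rpow_sub_rpow_le {s : ℝ} (hs0 : 0 < s) (hs1 : s ≤ 1) {u v : ℝ} (hv : 0 ≤ v) (huv : v ≤ u) :
    u ^ s - v ^ s ≤ (u - v) ^ s := by
  have h := NNReal.rpow_add_le_add_rpow (⟨v, hv⟩ : ℝ≥0) (⟨u - v, by simp; linarith⟩ : ℝ≥0) hs0.le hs1
  have := (NNReal.coe_le_coe).2 h
  push_cast [NNReal.coe_rpow] at this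
  change (v + (u - v)) ^ s ≤ v ^ s + (u - v) ^ s at this
  simp only [add_sub_cancel] at this
  linarith

lemma phiF_holder {p : ℝ} (hp1 : 1 < p) (hp2 : p < 2) (x y : ℝ) (hxy : y ≤ x) :
    |phiF p x - phiF p y| ≤ 2 ^ (2 - p) * (x - y) ^ (p - 1) := by
  set s := p - 1 with hs
  have hs0 : 0 < s := by simp [hs]; linarith
  have hs1 : s ≤ 1 := by simp [hs]; linarith
  have h2p : (2:ℝ) - p = 1 - s := by simp [hs]; ring
  have hone : (1:ℝ) ≤ 2 ^ (1 - s) := by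
    apply Real.one_le_rpow (by norm_num) (by linarith)
  have hpne : p ≠ 1 := by linarith
  rw [h2p]
  rcases le_total 0 y with hy | hy
  · have hx : (0:ℝ) ≤ x := le_trans hy hxy
    rw [phiF_of_nonneg hpne hx, phiF_of_nonneg hpne hy]
    have hmono : y ^ s ≤ x ^ s := Real.rpow_le_rpow hy hxy hs0.le
    rw [abs_of_nonneg (by linarith)]
    calc x ^ s - y ^ s ≤ (x - y) ^ s := rpow_sub_rpow_le hs0 hs1 hy hxy
      _ ≤ 2 ^ (1-s) * (x-y) ^ s := le_mul_of_one_le_left (Real.rpow_nonneg (by linarith) s) hone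
  · rcases le_total 0 x with hx | hx
    · rw [phiF_of_nonneg hpne hx, phiF_of_nonpos hpne hy]
      rw [sub_neg_eq_add,
        abs_of_nonneg (add_nonneg (Real.rpow_nonneg hx s) (Real.rpow_nonneg (by linarith) s))]
      have := two_rpow_bound hs0 hs1 hx (by linarith : (0:ℝ) ≤ -y)
      calc x ^ s + (-y) ^ s ≤ 2 ^ (1-s) * (x + -y) ^ s := this
        _ = 2 ^ (1-s) * (x - y) ^ s := by ring_nf
    · rw [phiF_of_nonpos hpne hx, phiF_of_nonpos hpne hy]
      have hmono : (-x) ^ s ≤ (-y) ^ s := Real.rpow_le_rpow (by linarith) (by linarith) hs0.le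
      rw [show -((-x)^s) - -((-y)^s) = (-y)^s - (-x)^s by ring, abs_of_nonneg (by linarith)]
      calc (-y) ^ s - (-x) ^ s ≤ (-y - -x) ^ s :=
            rpow_sub_rpow_le hs0 hs1 (by linarith) (by linarith)
        _ = (x - y) ^ s := by ring_nf
        _ ≤ 2 ^ (1-s) * (x-y) ^ s := le_mul_of_one_le_left (Real.rpow_nonneg (by linarith) s) hone

lemma phiF_holder' {p : ℝ} (hp1 : 1 < p) (hp2 : p < 2) (x y : ℝ) :
    |phiF p x - phiF p y| ≤ 2 ^ (2 - p) * |x - y| ^ (p - 1) := by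
  rcases le_total y x with h | h
  · rw [abs_of_nonneg (sub_nonneg.2 h)]; exact phiF_holder hp1 hp2 x y h
  · rw [abs_sub_comm, show |x - y| = y - x by rw [abs_sub_comm]; exact abs_of_nonneg (by linarith)]
    exact phiF_holder hp1 hp2 y x h

lemma phiF_continuous {p : ℝ} (hp1 : 1 < p) (hp2 : p < 2) : Continuous (phiF p) := by
  rw [Metric.continuous_iff]
  intro x ε hε
  set C : ℝ := 2 ^ (2 - p) with hC
  have hCpos : 0 < C := Real.rpow_pos_of_pos (by norm_num) _
  refine ⟨(ε / C) ^ (1 / (p - 1)), Real.rpow_pos_of_pos (by positivity) _, fun y hy => ?_⟩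
  have h1 : |y - x| ^ (p - 1) < ε / C := by
    have := Real.rpow_lt_rpow (abs_nonneg _) hy (by linarith : (0:ℝ) < p - 1)
    rwa [← Real.rpow_mul (by positivity), one_div_mul_cancel
      (by linarith : p - 1 ≠ 0), Real.rpow_one] at this
  calc dist (phiF p y) (phiF p x) = |phiF p y - phiF p x| := rfl
    _ ≤ C * |y - x| ^ (p - 1) := phiF_holder' hp1 hp2 y x
    _ < C * (ε / C) := (mul_lt_mul_iff_right₀ hCpos).2 h1
    _ = ε := by field_simp

lemma integral_abs_rpow {p : ℝ} (hp1 : 1 < p) (b : ℝ) :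
    |∫ u in (0:ℝ)..b, |u| ^ (p-1)| = |b| ^ p / p := by
  have hp0 : (0:ℝ) < p := by linarith
  have key : ∀ c : ℝ, 0 ≤ c → (∫ u in (0:ℝ)..c, |u| ^ (p-1)) = c ^ p / p := by
    intro c hc
    have : (∫ u in (0:ℝ)..c, |u| ^ (p-1)) = ∫ u in (0:ℝ)..c, u ^ (p-1) := by
      apply intervalIntegral.integral_congr
      intro u hu
      rw [Set.uIcc_of_le hc] at hu
      simp only []
      rw [abs_of_nonneg hu.1]
    rw [this, integral_rpow (Or.inl (by linarith))]
    rw [Real.zero_rpow (by linarith : p - 1 + 1 ≠ 0)]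
    rw [show p - 1 + 1 = p by ring]
    ring
  rcases le_total 0 b with hb | hb
  · rw [key b hb, abs_of_nonneg hb, abs_of_nonneg (by positivity)]
  · have h2 := intervalIntegral.integral_comp_neg (a := (0:ℝ)) (b := -b) (fun u : ℝ => |u| ^ (p-1))
    simp only [abs_neg, neg_neg, neg_zero] at h2
    rw [intervalIntegral.integral_symm, ← h2, key (-b) (by linarith), abs_neg,
      abs_of_nonneg (div_nonneg (Real.rpow_nonneg (by linarith) p) hp0.le),
      abs_of_nonpos hb]

lemma pointwise_ineq {p : ℝ} (hp1 : 1 < p) (hp2 : p < 2) (a b : ℝ) :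
    |a + b| ^ p ≤ |a| ^ p + p * phiF p a * b + 2 ^ (2 - p) * |b| ^ p := by
  set C : ℝ := 2 ^ (2 - p) with hC
  have hcont : Continuous (fun t => p * phiF p t) := continuous_const.mul (phiF_continuous hp1 hp2)
  have hder : ∀ t ∈ Set.uIcc a (a + b), HasDerivAt (fun x : ℝ => |x| ^ p) (p * phiF p t) t := by
    intro t _
    have := hasDerivAt_abs_rpow t hp1
    convert this using 1
    simp [phiF]; ring
  have hftc : (∫ t in a..(a+b), p * phiF p t) = |a + b| ^ p - |a| ^ p :=
    intervalIntegral.integral_eq_sub_of_hasDerivAt hder (hcont.intervalIntegrable _ _)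
  have hconst : (∫ t in a..(a+b), p * phiF p a) = p * phiF p a * b := by
    simp [intervalIntegral.integral_const]
    ring
  have hsplit : |a + b| ^ p - |a| ^ p - p * phiF p a * b
      = ∫ t in a..(a+b), (p * phiF p t - p * phiF p a) := by
    rw [intervalIntegral.integral_sub (hcont.intervalIntegrable _ _)
      (intervalIntegrable_const), hftc, hconst]
  have hbound : |∫ t in a..(a+b), (p * phiF p t - p * phiF p a)|
      ≤ |∫ t in a..(a+b), p * C * |t - a| ^ (p - 1)| := by
    rw [← Real.norm_eq_abs (∫ _ in _.._, _)]
    apply intervalIntegral.norm_integral_le_abs_of_norm_le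
    · filter_upwards with t
      rw [Real.norm_eq_abs, ← mul_sub, abs_mul, abs_of_pos (by linarith : (0:ℝ) < p), mul_assoc]
      exact mul_le_mul_of_nonneg_left (phiF_holder' hp1 hp2 t a) (by linarith)
    · exact (continuous_const.mul
        ((continuous_abs.comp (continuous_id.sub continuous_const)).rpow_const
          fun _ => Or.inr (by linarith))).intervalIntegrable _ _
  have hval : |∫ t in a..(a+b), p * C * |t - a| ^ (p - 1)| = C * |b| ^ p := by
    rw [intervalIntegral.integral_const_mul]
    have : (∫ t in a..(a+b), |t - a| ^ (p - 1)) = ∫ u in (a-a)..(a+b-a), |u| ^ (p - 1) :=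
      intervalIntegral.integral_comp_sub_right (fun u => |u| ^ (p-1)) a
    rw [this, show a - a = (0:ℝ) by ring, show a + b - a = b by ring, abs_mul,
      integral_abs_rpow hp1,
      abs_of_pos (by positivity : (0:ℝ) < p * C)]
    field_simp
  have h := hbound.trans hval.le
  rw [← hsplit] at h
  have h2 := (abs_le.mp h).2
  linarith

lemma crude_bound {p : ℝ} (hp0 : 0 < p) (a b : ℝ) :
    |a + b| ^ p ≤ 2 ^ p * (|a| ^ p + |b| ^ p) := by
  have h2 : (0:ℝ) ≤ 2 ^ p := Real.rpow_nonneg (by norm_num) p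
  rcases le_total |a| |b| with h | h
  · calc |a + b| ^ p ≤ (2 * |b|) ^ p :=
        Real.rpow_le_rpow (abs_nonneg _) (by have := abs_add_le a b; linarith) hp0.le
      _ = 2 ^ p * |b| ^ p := Real.mul_rpow (by norm_num) (abs_nonneg _)
      _ ≤ 2 ^ p * (|a| ^ p + |b| ^ p) := by
        have := Real.rpow_nonneg (abs_nonneg a) p; nlinarith
  · calc |a + b| ^ p ≤ (2 * |a|) ^ p :=
        Real.rpow_le_rpow (abs_nonneg _) (by have := abs_add_le a b; linarith) hp0.le
      _ = 2 ^ p * |a| ^ p := Real.mul_rpow (by norm_num) (abs_nonneg _)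
      _ ≤ 2 ^ p * (|a| ^ p + |b| ^ p) := by
        have := Real.rpow_nonneg (abs_nonneg b) p; nlinarith

lemma abs_rpow_pred_le {p : ℝ} (hp1 : 1 < p) (x : ℝ) : |x| ^ (p - 1) ≤ 1 + |x| ^ p := by
  rcases le_total |x| 1 with h | h
  · have h1 : |x| ^ (p - 1) ≤ 1 := Real.rpow_le_one (abs_nonneg _) h (by linarith)
    have := Real.rpow_nonneg (abs_nonneg x) p
    linarith
  · have h1 : |x| ^ (p - 1) ≤ |x| ^ p := Real.rpow_le_rpow_of_exponent_le h (by linarith)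
    linarith

theorem inner_moment_upper_bound {Ω : Type*} [MeasurableSpace Ω]
    (μ : Measure Ω) [IsProbabilityMeasure μ]
    (d : ℕ) (ξ : Ω → Fin d → ℝ) (hξ : ∀ i, Measurable fun ω => ξ ω i)
    (hindep : iIndepFun
      (fun i ω => ξ ω i) μ)
    (p : ℝ) (hp1 : 1 < p) (hp2 : p < 2)
    (σ : Fin d → ℝ) (hσ : ∀ i, 0 ≤ σ i)
    (hint : ∀ i, Integrable (fun ω => ξ ω i) μ)
    (hintp : ∀ i, Integrable (fun ω => |ξ ω i| ^ p) μ)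
    (hmean : ∀ i, ∫ ω, ξ ω i ∂μ = 0)
    (hmom : ∀ i, ∫ ω, |ξ ω i| ^ p ∂μ = σ i ^ p)
    (lam : Fin d → ℝ) (hlam : ∑ i, lam i ^ 2 = 1) :
    ∫ ω, |∑ i, lam i * ξ ω i| ^ p ∂μ ≤
      2 ^ (2 - p) * (∑ i, σ i ^ (2 * p / (2 - p))) ^ (1 - p / 2) := by
  classical
  have hp0 : (0:ℝ) < p := by linarith
  set X : Fin d → Ω → ℝ := fun i ω => lam i * ξ ω i with hX
  have hXmeas : ∀ i, Measurable (X i) := fun i => (hξ i).const_mul (lam i)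
  have hXindep : iIndepFun X μ :=
    hindep.comp (fun i x => lam i * x) (fun i => measurable_const_mul (lam i))
  have hXint : ∀ i, Integrable (X i) μ := fun i => (hint i).const_mul (lam i)
  have hXmean : ∀ i, ∫ ω, X i ω ∂μ = 0 := by
    intro i
    simp only [hX]
    rw [integral_const_mul, hmean i, mul_zero]
  have hXabs : ∀ i, (fun ω => |X i ω| ^ p) = fun ω => |lam i| ^ p * |ξ ω i| ^ p := by
    intro i
    funext ω
    simp only [hX]
    rw [abs_mul, Real.mul_rpow (abs_nonneg _) (abs_nonneg _)]
  have hXintp : ∀ i, Integrable (fun ω => |X i ω| ^ p) μ := by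
    intro i
    rw [hXabs i]
    exact (hintp i).const_mul _
  have hXmom : ∀ i, ∫ ω, |X i ω| ^ p ∂μ = |lam i| ^ p * σ i ^ p := by
    intro i
    rw [hXabs i, integral_const_mul, hmom i]
  have main : ∀ s : Finset (Fin d),
      Integrable (fun ω => |∑ i ∈ s, X i ω| ^ p) μ ∧
      ∫ ω, |∑ i ∈ s, X i ω| ^ p ∂μ ≤ 2 ^ (2 - p) * ∑ i ∈ s, |lam i| ^ p * σ i ^ p := by
    intro s
    induction s using Finset.induction_on with
    | empty =>
      simp [Real.zero_rpow (by linarith : p ≠ 0)]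
    | insert i s hi ih =>
      obtain ⟨ihInt, ihLe⟩ := ih
      set S : Ω → ℝ := fun ω => ∑ j ∈ s, X j ω with hS
      have ihInt' : Integrable (fun ω => |S ω| ^ p) μ := ihInt
      have ihLe' : ∫ ω, |S ω| ^ p ∂μ ≤ 2 ^ (2 - p) * ∑ i ∈ s, |lam i| ^ p * σ i ^ p := ihLe
      have hSmeas : Measurable S := Finset.measurable_sum s (fun j _ => hXmeas j)
      have hphiS_meas : Measurable (fun ω => phiF p (S ω)) :=
        ((phiF_continuous hp1 hp2).measurable).comp hSmeas
      have hphiS_int : Integrable (fun ω => phiF p (S ω)) μ := by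
        have hb : Integrable (fun ω => |S ω| ^ p + 1) μ := ihInt'.add (integrable_const 1)
        refine Integrable.mono hb hphiS_meas.aestronglyMeasurable ?_
        filter_upwards with ω
        rw [Real.norm_eq_abs, abs_phiF (by linarith : p ≠ 1), Real.norm_eq_abs]
        have h0 : (0:ℝ) ≤ |S ω| ^ p := Real.rpow_nonneg (abs_nonneg _) p
        rw [abs_of_nonneg (by linarith : (0:ℝ) ≤ |S ω| ^ p + 1)]
        have := abs_rpow_pred_le hp1 (S ω)
        linarith
      have hSind : IndepFun S (X i) μ := by
        have h := hXindep.indepFun_finset_sum_of_notMem hXmeas hi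
        convert h using 1
        funext ω
        simp [hS]
      have hphiSind : IndepFun (fun ω => phiF p (S ω)) (X i) μ :=
        hSind.comp (phiF_continuous hp1 hp2).measurable measurable_id
      have hprod_int : Integrable (fun ω => phiF p (S ω) * X i ω) μ := by
        have := hphiSind.integrable_mul hphiS_int (hXint i)
        simpa [Pi.mul_def] using this
      have hcross : ∫ ω, phiF p (S ω) * X i ω ∂μ = 0 := by
        have h := hphiSind.integral_mul_eq_mul_integral hphiS_int.aestronglyMeasurable (hXint i).aestronglyMeasurable
        simp only [Pi.mul_apply] at h
        calc ∫ ω, phiF p (S ω) * X i ω ∂μ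
            = (∫ ω, phiF p (S ω) ∂μ) * ∫ ω, X i ω ∂μ := h
          _ = 0 := by rw [hXmean i, mul_zero]
      have hsum : ∀ ω, ∑ j ∈ insert i s, X j ω = S ω + X i ω := by
        intro ω
        rw [Finset.sum_insert hi, add_comm]
      have hnewInt : Integrable (fun ω => |∑ j ∈ insert i s, X j ω| ^ p) μ := by
        simp_rw [hsum]
        have hb : Integrable (fun ω => 2 ^ p * (|S ω| ^ p + |X i ω| ^ p)) μ :=
          (ihInt'.add (hXintp i)).const_mul (2 ^ p)
        refine Integrable.mono hb
          (((hSmeas.add (hXmeas i)).abs.pow_const _).aestronglyMeasurable) ?_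
        filter_upwards with ω
        rw [Real.norm_eq_abs, Real.norm_eq_abs,
          abs_of_nonneg (Real.rpow_nonneg (abs_nonneg _) _),
          abs_of_nonneg (by positivity :
            (0:ℝ) ≤ 2 ^ p * (|S ω| ^ p + |X i ω| ^ p))]
        exact crude_bound hp0 _ _
      refine ⟨hnewInt, ?_⟩
      have hint1 : Integrable (fun ω => p * (phiF p (S ω) * X i ω)) μ := hprod_int.const_mul p
      have hint2 : Integrable (fun ω => 2 ^ (2-p) * |X i ω| ^ p) μ := (hXintp i).const_mul _
      have hint12 : Integrable (fun ω => |S ω| ^ p + p * (phiF p (S ω) * X i ω)) μ :=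
        ihInt'.add hint1
      have hmono : ∫ ω, |∑ j ∈ insert i s, X j ω| ^ p ∂μ ≤
          ∫ ω, (|S ω| ^ p + p * (phiF p (S ω) * X i ω) + 2 ^ (2-p) * |X i ω| ^ p) ∂μ := by
        refine integral_mono hnewInt ?_ ?_
        · exact hint12.add hint2
        · intro ω
          simp only [hsum ω]
          have := pointwise_ineq hp1 hp2 (S ω) (X i ω)
          calc |S ω + X i ω| ^ p
              ≤ |S ω| ^ p + p * phiF p (S ω) * X i ω + 2^(2-p) * |X i ω| ^ p := this
            _ = |S ω| ^ p + p * (phiF p (S ω) * X i ω) + 2^(2-p) * |X i ω| ^ p := by ring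
      rw [integral_add hint12 hint2, integral_add ihInt' hint1, integral_const_mul,
        integral_const_mul, hcross, mul_zero, add_zero, hXmom i] at hmono
      rw [Finset.sum_insert hi, mul_add]
      have hCpos : (0:ℝ) < 2 ^ (2 - p) := Real.rpow_pos_of_pos (by norm_num) _
      have hterm : (0:ℝ) ≤ |lam i| ^ p * σ i ^ p :=
        mul_nonneg (Real.rpow_nonneg (abs_nonneg _) _) (Real.rpow_nonneg (hσ i) _)
      have h1le : (1:ℝ) ≤ 2 ^ (2 - p) := Real.one_le_rpow (by norm_num) (by linarith)
      calc ∫ ω, |∑ j ∈ insert i s, X j ω| ^ p ∂μ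
          ≤ (∫ ω, |S ω| ^ p ∂μ) + 2 ^ (2-p) * (|lam i| ^ p * σ i ^ p) := hmono
        _ ≤ 2 ^ (2-p) * (∑ j ∈ s, |lam j| ^ p * σ j ^ p) + 2 ^ (2-p) * (|lam i| ^ p * σ i ^ p) := by
            have := ihLe'; linarith
        _ = 2 ^ (2-p) * (|lam i| ^ p * σ i ^ p) + 2 ^ (2-p) * ∑ j ∈ s, |lam j| ^ p * σ j ^ p := by
            ring
  -- Hölder step
  have holder : ∑ i, |lam i| ^ p * σ i ^ p ≤ (∑ i, σ i ^ (2 * p / (2 - p))) ^ (1 - p / 2) := by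
    have hpq : Real.HolderConjugate (2 / p) (2 / (2 - p)) := by
      constructor
      · rw [inv_div, inv_div, inv_one]; ring
      · exact div_pos two_pos hp0
      · apply div_pos <;> linarith
    have h := Real.inner_le_Lp_mul_Lq_of_nonneg (s := Finset.univ) hpq
      (f := fun i => |lam i| ^ p) (g := fun i => σ i ^ p)
      (fun i _ => Real.rpow_nonneg (abs_nonneg _) _)
      (fun i _ => Real.rpow_nonneg (hσ i) _)
    have e1 : ∀ i : Fin d, (|lam i| ^ p) ^ (2 / p) = lam i ^ 2 := by
      intro i
      rw [← Real.rpow_mul (abs_nonneg _), mul_div_cancel₀ 2 hp0.ne', Real.rpow_two, sq_abs]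
    have e2 : ∀ i : Fin d, (σ i ^ p) ^ (2 / (2 - p)) = σ i ^ (2 * p / (2 - p)) := by
      intro i
      rw [← Real.rpow_mul (hσ i)]
      congr 1
      field_simp
    simp only [e1, e2] at h
    rw [hlam, Real.one_rpow, one_mul] at h
    convert h using 2
    rw [one_div]
    field_simp
  have final := (main Finset.univ).2
  have goal_eq : ∫ ω, |∑ i, lam i * ξ ω i| ^ p ∂μ = ∫ ω, |∑ i ∈ Finset.univ, X i ω| ^ p ∂μ := rfl
  rw [goal_eq]
  calc ∫ ω, |∑ i ∈ Finset.univ, X i ω| ^ p ∂μ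
      ≤ 2 ^ (2-p) * ∑ i, |lam i| ^ p * σ i ^ p := final
    _ ≤ 2 ^ (2-p) * (∑ i, σ i ^ (2 * p / (2 - p))) ^ (1 - p / 2) := by
        have hCpos : (0:ℝ) < 2 ^ (2 - p) := Real.rpow_pos_of_pos (by norm_num) _
        exact mul_le_mul_of_nonneg_left holder hCpos.le
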